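/- arXiv:1707.05401 — 4 statements merged into one kernel-verified Lean document; each statement's English description precedes it below -/
import Mathlib

section
/- Let f be a random circle homeomorphism that has a unique f-minimal set G, and suppose G is an arc, i.e. a closed connected proper subset of S¹ that is not a single point. Then every orientation-preserving homeomorphism τ of S¹ satisfying τ ∘ f_α = f_α ∘ τ for all α ∈ Δ has a fixed point in G; in particular, f admits no symmetry. -/
open MeasureTheory Filter Topology Set
open scoped ENNReal

noncomputable section

/-- The circle `S¹ = ℝ/ℤ`. -/
abbrev S1 : Type := AddCircle (1 : ℝ)

namespace RandomCircle

/-- The representative of `x ∈ S¹` in `[0,1)`. -/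
def rep (x : S1) : ℝ := (AddCircle.equivIco 1 0 x : ℝ)

/-- `dPlus x y` is the anticlockwise distance from `x` to `y`, i.e. the representative
of `y - x` in `[0,1)`. -/
def dPlus (x y : S1) : ℝ := rep (y - x)

/-- The closed anticlockwise arc `[x,y]` from `x` to `y`. -/
def cIcc (x y : S1) : Set S1 := {z | dPlus x z ≤ dPlus x y}

/-- The arc `[x,y[`. -/
def cIco (x y : S1) : Set S1 := {z | dPlus x z < dPlus x y}

/-- The arc `]x,y]`. -/
def cIoc (x y : S1) : Set S1 := {z | 0 < dPlus x z ∧ dPlus x z ≤ dPlus x y}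

/-- The open arc `]x,y[`. -/
def cIoo (x y : S1) : Set S1 := {z | 0 < dPlus x z ∧ dPlus x z < dPlus x y}

/-- A homeomorphism of the circle is orientation-preserving if it admits a strictly
increasing degree-one lift to `ℝ`. -/
def OrientationPreserving (h : S1 ≃ₜ S1) : Prop :=
  ∃ H : ℝ → ℝ, StrictMono H ∧ (∀ x, H (x + 1) = H x + 1) ∧
    ∀ x : ℝ, h ((x : ℝ) : S1) = ((H x : ℝ) : S1)

/-- A homeomorphism of the circle is orientation-reversing if it admits a strictly
decreasing degree-(-1) lift to `ℝ`. -/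
def OrientationReversing (h : S1 ≃ₜ S1) : Prop :=
  ∃ H : ℝ → ℝ, StrictAnti H ∧ (∀ x, H (x + 1) = H x - 1) ∧
    ∀ x : ℝ, h ((x : ℝ) : S1) = ((H x : ℝ) : S1)

/-- A random circle homeomorphism over a noise space `Δ`. -/
structure RandomCircleHomeo (Δ : Type*) [TopologicalSpace Δ] where
  homeo : Δ → S1 ≃ₜ S1
  orient : ∀ α, OrientationPreserving (homeo α)
  cont : Continuous fun p : Δ × S1 => homeo p.1 p.2
  nondeg : ∀ x : ℤ → S1, ¬ Dense (Set.range x) →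
    ∃ (n : ℤ) (α : Δ), homeo α (x n) ≠ x (n + 1)

variable {Δ : Type*} [TopologicalSpace Δ]

/-- A closed `f`-invariant set. -/
def RandomCircleHomeo.IsInvariant (f : RandomCircleHomeo Δ) (G : Set S1) : Prop :=
  IsClosed G ∧ ∀ α, f.homeo α '' G ⊆ G

/-- An `f`-minimal set. -/
def RandomCircleHomeo.IsMinimal (f : RandomCircleHomeo Δ) (G : Set S1) : Prop :=
  f.IsInvariant G ∧ G.Nonempty ∧
    ∀ G' ⊆ G, f.IsInvariant G' → G'.Nonempty → G' = G

/-- A closed set invariant under the inverse random homeomorphism `f⁻¹`. -/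
def RandomCircleHomeo.IsInvInvariant (f : RandomCircleHomeo Δ) (G : Set S1) : Prop :=
  IsClosed G ∧ ∀ α, (f.homeo α).symm '' G ⊆ G

/-- An `f⁻¹`-minimal set. -/
def RandomCircleHomeo.IsInvMinimal (f : RandomCircleHomeo Δ) (G : Set S1) : Prop :=
  f.IsInvInvariant G ∧ G.Nonempty ∧
    ∀ G' ⊆ G, f.IsInvInvariant G' → G'.Nonempty → G' = G

/-- A symmetry of `f`: a nontrivial orientation-preserving finite-order homeomorphism
commuting with every `f_α`. -/
def IsSymmetry (f : RandomCircleHomeo Δ) (τ : S1 ≃ₜ S1) : Prop :=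
  OrientationPreserving τ ∧ (⇑τ ≠ id) ∧ (∃ k : ℕ, 0 < k ∧ (⇑τ)^[k] = id) ∧
    ∀ α x, τ (f.homeo α x) = f.homeo α (τ x)

/-- The order of a finite-order homeomorphism. -/
def symOrder (τ : S1 ≃ₜ S1) : ℕ := sInf {k : ℕ | 0 < k ∧ (⇑τ)^[k] = id}

/-- The union of all `f`-minimal sets. -/
def minimalUnion (f : RandomCircleHomeo Δ) : Set S1 :=
  ⋃₀ {G | f.IsMinimal G}

/-- `f` and `g` are deterministically topologically conjugate. -/
def DetTopConj (f g : RandomCircleHomeo Δ) : Prop :=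
  ∃ h : S1 ≃ₜ S1, ∀ α x, f.homeo α x = h.symm (g.homeo α (h x))

/-- `f` and `g` are deterministically orientationally conjugate. -/
def DetOrientConj (f g : RandomCircleHomeo Δ) : Prop :=
  ∃ h : S1 ≃ₜ S1, OrientationPreserving h ∧ ∀ α x, f.homeo α x = h.symm (g.homeo α (h x))

/-- The left shift on `Δ^ℤ`. -/
def shift (ω : ℤ → Δ) : ℤ → Δ := fun n => ω (n + 1)

/-- `n`-fold left shift. -/
def shiftN (n : ℕ) (ω : ℤ → Δ) : ℤ → Δ := fun i => ω (i + n)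

/-- `n`-fold right (inverse) shift, i.e. `θ^{-n}`. -/
def shiftNeg (n : ℕ) (ω : ℤ → Δ) : ℤ → Δ := fun i => ω (i - n)

/-- The forward composition `φ_f(n, ω) = f_{ω(n-1)} ∘ ⋯ ∘ f_{ω 0}`. -/
def fwd (f : RandomCircleHomeo Δ) (ω : ℤ → Δ) : ℕ → S1 ≃ₜ S1
  | 0 => Homeomorph.refl S1
  | n + 1 => (fwd f ω n).trans (f.homeo (ω n))

/-- `φ_f(n, θ^{-n}ω)`, the "pullback" composition `f_{ω(-1)} ∘ ⋯ ∘ f_{ω(-n)}`. -/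
def pull (f : RandomCircleHomeo Δ) (ω : ℤ → Δ) (n : ℕ) : S1 ≃ₜ S1 :=
  fwd f (shiftNeg n ω) n

/-- `φ_f(-n, θ^{n}ω) = (f_{ω(n-1)} ∘ ⋯ ∘ f_{ω 0})⁻¹`. -/
def pullBack (f : RandomCircleHomeo Δ) (ω : ℤ → Δ) (n : ℕ) : S1 ≃ₜ S1 :=
  (fwd f ω n).symm


/-- Composition over a finite tuple: `f_{a(n-1)} ∘ ⋯ ∘ f_{a 0}`. -/
def fwdFin (f : RandomCircleHomeo Δ) : ∀ {n : ℕ}, (Fin n → Δ) → (S1 ≃ₜ S1)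
  | 0, _ => Homeomorph.refl S1
  | n + 1, a => (fwdFin f (fun i : Fin n => a i.castSucc)).trans (f.homeo (a (Fin.last n)))

/-- Anticlockwise index shift by `m` steps modulo `k` in `Fin k`. -/
def idx {k : ℕ} (hk : 0 < k) (i : Fin k) (m : ℕ) : Fin k :=
  ⟨(i.1 + m) % k, Nat.mod_lt _ hk⟩

/-- The circle map `g_{k,l}([x]) = [x + sin(2πkx)/(2πk) + l/k]`. -/
def gkl (k l : ℕ) : S1 → S1 :=
  fun y => y + ((Real.sin (2 * Real.pi * k * rep y) / (2 * Real.pi * k) + l / k : ℝ) : S1)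

variable [MeasurableSpace Δ]

/-- `P` is the two-sided i.i.d. product of `ν` on `Δ^ℤ`. -/
def IsProductOf (ν : Measure Δ) (P : Measure (ℤ → Δ)) : Prop :=
  IsProbabilityMeasure P ∧
  ∀ (t : Finset ℤ) (s : ℤ → Set Δ), (∀ i, MeasurableSet (s i)) →
    P {ω | ∀ i ∈ t, ω i ∈ s i} = ∏ i ∈ t, ν (s i)

/-- The σ-algebra `F₋ = σ(ω ↦ ω i : i < 0)` on `Δ^ℤ`. -/
def Fminus (Δ : Type*) [MeasurableSpace Δ] : MeasurableSpace (ℤ → Δ) :=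
  MeasurableSpace.comap (fun ω (i : {i : ℤ // i < 0}) => ω i.1) inferInstance

/-- The σ-algebra `F₊ = σ(ω ↦ ω i : i ≥ 0)` on `Δ^ℤ`. -/
def Fplus (Δ : Type*) [MeasurableSpace Δ] : MeasurableSpace (ℤ → Δ) :=
  MeasurableSpace.comap (fun ω (i : {i : ℤ // 0 ≤ i}) => ω i.1) inferInstance

/-- The skew-product map `Θ_f(ω, x) = (θω, f_{ω 0} x)` on `Ω × S¹`. -/
def ThetaF (f : RandomCircleHomeo Δ) : ((ℤ → Δ) × S1) → ((ℤ → Δ) × S1) :=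
  fun p => (shift p.1, f.homeo (p.1 0) p.2)

/-- A `φ_f`-invariant measure: a probability measure on `Ω × S¹` with `Ω`-marginal `P`,
invariant under `Θ_f`. -/
def IsPhiInvariant (f : RandomCircleHomeo Δ) (P : Measure (ℤ → Δ))
    (μ : Measure ((ℤ → Δ) × S1)) : Prop :=
  IsProbabilityMeasure μ ∧ μ.map Prod.fst = P ∧ μ.map (ThetaF f) = μ

/-- A `φ_f`-ergodic measure. -/
def IsPhiErgodic (f : RandomCircleHomeo Δ) (P : Measure (ℤ → Δ))
    (μ : Measure ((ℤ → Δ) × S1)) : Prop :=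
  IsPhiInvariant f P μ ∧ Ergodic (ThetaF f) μ

/-- An `f`-stationary measure. -/
def IsStationary (f : RandomCircleHomeo Δ) (ν : Measure Δ) (ρ : Measure S1) : Prop :=
  IsProbabilityMeasure ρ ∧
    Measure.map (fun p : Δ × S1 => f.homeo p.1 p.2) (ν.prod ρ) = ρ

/-- An `f⁻¹`-stationary measure. -/
def IsInvStationary (f : RandomCircleHomeo Δ) (ν : Measure Δ) (ρ : Measure S1) : Prop :=
  IsProbabilityMeasure ρ ∧
    Measure.map (fun p : Δ × S1 => (f.homeo p.1).symm p.2) (ν.prod ρ) = ρ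

/-- `f` is contractive, with attractor `a` and repeller `r`. -/
def IsContractiveWith (f : RandomCircleHomeo Δ) (P : Measure (ℤ → Δ))
    (a r : (ℤ → Δ) → S1) : Prop :=
  Measurable[Fminus Δ] a ∧ Measurable[Fplus Δ] r ∧
  (∀ᵐ ω ∂P, f.homeo (ω 0) (a ω) = a (shift ω)) ∧
  (∀ᵐ ω ∂P, f.homeo (ω 0) (r ω) = r (shift ω)) ∧
  (∀ᵐ ω ∂P, ∀ x : S1, x ≠ r ω →
    Tendsto (fun n => dist (fwd f ω n x) (a (shiftN n ω))) atTop (𝓝 0))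

/-- `f` is contractive. -/
def IsContractive (f : RandomCircleHomeo Δ) (P : Measure (ℤ → Δ)) : Prop :=
  ∃ a r, IsContractiveWith f P a r

/-- `f` and `g` have topologically conjugate dynamics. -/
def TopConjDyn (f g : RandomCircleHomeo Δ) (P : Measure (ℤ → Δ)) : Prop :=
  ∃ h : (ℤ → Δ) → S1 ≃ₜ S1,
    (∀ x : S1, Measurable fun ω => h ω x) ∧
    ∀ᵐ ω ∂P, ∀ x, f.homeo (ω 0) x = (h (shift ω)).symm (g.homeo (ω 0) (h ω x))

/-- `f` and `g` have orientationally conjugate dynamics. -/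
def OrientConjDyn (f g : RandomCircleHomeo Δ) (P : Measure (ℤ → Δ)) : Prop :=
  ∃ h : (ℤ → Δ) → S1 ≃ₜ S1,
    (∀ x : S1, Measurable fun ω => h ω x) ∧
    (∀ᵐ ω ∂P, OrientationPreserving (h ω)) ∧
    ∀ᵐ ω ∂P, ∀ x, f.homeo (ω 0) x = (h (shift ω)).symm (g.homeo (ω 0) (h ω x))

/-- `x_n ↗ x`: convergence with `x_{n+1} ∈ [x_n, x[`. -/
def SeqUp (x : ℕ → S1) (l : S1) : Prop :=
  Tendsto x atTop (𝓝 l) ∧ ∀ n, x (n + 1) ∈ cIco (x n) l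

/-- `x_n ↘ x`: convergence with `x_{n+1} ∈ ]x, x_n]`. -/
def SeqDown (x : ℕ → S1) (l : S1) : Prop :=
  Tendsto x atTop (𝓝 l) ∧ ∀ n, x (n + 1) ∈ cIoc l (x n)

/-- The rotation `τ_m : x ↦ x + [1/m]`. -/
def tau (m : ℕ) : S1 ≃ₜ S1 := Homeomorph.addLeft ((((m : ℝ)⁻¹ : ℝ) : S1))

/-- The point `[1/m] ∈ S¹`. -/
def um (m : ℕ) : S1 := (((m : ℝ)⁻¹ : ℝ) : S1)

/-- `F` is the `z_m`-lift of `f`: `F_α(m·x) = m·f_α(x)`. -/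
def IsZLift (m : ℕ) (f F : RandomCircleHomeo Δ) : Prop :=
  ∀ α (x : S1), F.homeo α (m • x) = m • (f.homeo α x)

/-- The unique point of `[[0], [1/m][` whose `m`-th multiple is `y`. -/
def mRoot (m : ℕ) (y : S1) : S1 := ((rep y / m : ℝ) : S1)

/-- Anticlockwise enumeration of a finite family of closed arcs:
`C i = [a i, b i]` with distinct endpoints, the arcs are pairwise disjoint, and
the open gap between consecutive arcs meets none of the arcs. -/
def AnticlockwiseArcs {k : ℕ} (C : Fin k → Set S1) (a b : Fin k → S1) : Prop :=
  (∀ i, C i = cIcc (a i) (b i)) ∧ (∀ i, a i ≠ b i) ∧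
  (Pairwise fun i j => Disjoint (C i) (C j)) ∧
  (∀ i : Fin k, (⋃ j, C j) ∩ cIoo (b i) (a ⟨(i.1 + 1) % k, Nat.mod_lt _ i.pos⟩) = ∅)

/-- The structure data `(k, l)` of `f` (Proposition 2.4): the union of the minimal
sets has exactly `k` connected components `C 0, …, C (k-1)`, listed in anticlockwise
order, and `f_α(C i) ⊆ C (i + l mod k)` for all `α, i`. -/
def StructureData (f : RandomCircleHomeo Δ) (k l : ℕ) : Prop :=
  0 < k ∧ l < k ∧
  ∃ C : Fin k → Set S1,
    Function.Injective C ∧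
    (Set.range C = {s | ∃ x ∈ minimalUnion f, s = connectedComponentIn (minimalUnion f) x}) ∧
    (k = 1 ∨ ∃ a b : Fin k → S1, AnticlockwiseArcs C a b) ∧
    (∀ α (i : Fin k), f.homeo α '' C i ⊆ C ⟨(i.1 + l) % k, Nat.mod_lt _ i.pos⟩)

variable {Δ : Type*} [TopologicalSpace Δ] [PolishSpace Δ] [ConnectedSpace Δ]
  [MeasurableSpace Δ] [BorelSpace Δ]

/-- A continuous self-map of a compact connected proper nonempty subset of S1 has a fixed pt. -/
theorem fixed_of_selfmap (G : Set S1) (hcl : IsClosed G) (hne : G.Nonempty)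
    (hconn : IsConnected G) (hproper : G ≠ Set.univ)
    (τ : S1 → S1) (hτc : Continuous τ) (hτG : ∀ x ∈ G, τ x ∈ G) :
    ∃ x ∈ G, τ x = x := by
  obtain ⟨p, hp⟩ : ∃ p : S1, p ∉ G := by
    by_contra h; push_neg at h; exact hproper (eq_univ_of_forall h)
  -- choose a real representative of p
  obtain ⟨c, -, hc⟩ := AddCircle.eq_coe_Ico p
  set e : S1 → ℝ := fun x => (AddCircle.equivIco 1 c x : ℝ) with he
  have he_inv : ∀ x : S1, ((e x : ℝ) : S1) = x := fun x =>
    (AddCircle.equivIco 1 c).symm_apply_apply x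
  have he_inj : Function.Injective e := fun x y h => by
    rw [← he_inv x, ← he_inv y, h]
  have he_cont : ∀ x : S1, x ≠ p → ContinuousAt e x := by
    intro x hx
    exact continuousAt_subtype_val.comp
      (AddCircle.continuousAt_equivIco 1 c (by rwa [hc]))
  have hGp : ∀ x ∈ G, x ≠ p := fun x hx h => hp (h ▸ hx)
  have he_contOn : ContinuousOn e G := fun x hx =>
    ((he_cont x (hGp x hx)).continuousWithinAt)
  have hcompact : IsCompact G := hcl.isCompact
  set K : Set ℝ := e '' G with hK
  have hKc : IsCompact K := hcompact.image_of_continuousOn he_contOn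
  have hKconn : IsConnected K := hconn.image e he_contOn
  have hKne : K.Nonempty := hne.image e
  obtain ⟨a, b, hab⟩ : ∃ a b : ℝ, K = Icc a b :=
    ⟨_, _, eq_Icc_of_connected_compact hKconn hKc⟩
  set F : ℝ → ℝ := fun t => e (τ ((t : ℝ) : S1)) with hF
  have hmem : ∀ t ∈ K, ((t : ℝ) : S1) ∈ G := by
    rintro t ⟨x, hx, rfl⟩; rwa [he_inv]
  have hFK : ∀ t ∈ K, F t ∈ K := fun t ht => ⟨τ ((t:ℝ):S1), hτG _ (hmem t ht), rfl⟩
  have hFc : ContinuousOn F K := by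
    intro t ht
    have h1 : ContinuousAt (fun t : ℝ => τ ((t : ℝ) : S1)) t :=
      (hτc.comp (AddCircle.continuous_mk' (1 : ℝ))).continuousAt
    have h2 := ContinuousAt.comp (x := t) (he_cont _ (hGp _ (hτG _ (hmem t ht)))) h1
    exact h2.continuousWithinAt
  have hle : a ≤ b := by
    obtain ⟨t, ht⟩ := hKne; rw [hab] at ht; exact ht.1.trans ht.2
  have hga : 0 ≤ F a - a := by
    have := hFK a (by rw [hab]; exact ⟨le_refl a, hle⟩)
    rw [hab] at this; linarith [this.1]
  have hgb : F b - b ≤ 0 := by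
    have := hFK b (by rw [hab]; exact ⟨hle, le_refl b⟩)
    rw [hab] at this; linarith [this.2]
  have hgc : ContinuousOn (fun t => F t - t) (Icc a b) := by
    rw [← hab]; exact hFc.sub continuousOn_id
  have h0 : (0:ℝ) ∈ Icc (F b - b) (F a - a) := ⟨hgb, hga⟩
  obtain ⟨t, htK, ht0⟩ := intermediate_value_Icc' hle hgc h0
  rw [← hab] at htK
  obtain ⟨x, hxG, rfl⟩ := htK
  refine ⟨x, hxG, he_inj ?_⟩
  have : F (e x) = e x := by simp only at ht0; linarith
  simpa [hF, he_inv] using this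

theorem op_finite_order_fixed_eq_id (τ : S1 ≃ₜ S1)
    (hOP : ∃ H : ℝ → ℝ, StrictMono H ∧ (∀ x, H (x + 1) = H x + 1) ∧
      ∀ x : ℝ, τ ((x : ℝ) : S1) = ((H x : ℝ) : S1))
    (k : ℕ) (hk : 0 < k) (hiter : (⇑τ)^[k] = id)
    (x₀S : S1) (hfix : τ x₀S = x₀S) : ⇑τ = id := by
  obtain ⟨H, hmono, hper, hlift⟩ := hOP
  set x₀ : ℝ := (AddCircle.equivIco 1 0 x₀S : ℝ) with hx₀
  have hx₀S : ((x₀ : ℝ) : S1) = x₀S := (AddCircle.equivIco 1 0).symm_apply_apply x₀S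
  -- H x₀ - x₀ is an integer m
  have h1 : ((H x₀ : ℝ) : S1) = ((x₀ : ℝ) : S1) := by
    rw [← hlift, hx₀S, hfix]
  obtain ⟨m, hm⟩ : ∃ m : ℤ, H x₀ - x₀ = m := by
    have := (QuotientAddGroup.eq (s := AddSubgroup.zmultiples (1:ℝ))).mp h1
    obtain ⟨m, hm⟩ := this
    exact ⟨-m, by push_cast [zsmul_eq_mul] at hm ⊢; linarith⟩
  set H' : ℝ → ℝ := fun x => H x - m with hH'
  have hmono' : StrictMono H' := fun a b h => by
    simp only [hH']; exact sub_lt_sub_right (hmono h) _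
  have hper' : ∀ x, H' (x + 1) = H' x + 1 := fun x => by simp only [hH', hper x]; ring
  have hint : ((m : ℝ) : S1) = 0 := by
    have : ((m:ℝ)) ∈ AddSubgroup.zmultiples (1:ℝ) := ⟨m, by simp⟩
    simpa using (QuotientAddGroup.eq_zero_iff _).mpr this
  have hlift' : ∀ x : ℝ, τ ((x : ℝ) : S1) = ((H' x : ℝ) : S1) := by
    intro x
    rw [hlift x, hH']
    have : ((H x - m : ℝ) : S1) = ((H x : ℝ) : S1) - ((m:ℝ) : S1) :=
      QuotientAddGroup.mk_sub _ _ _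
    rw [this, hint, sub_zero]
  have hfix' : H' x₀ = x₀ := by simp [hH']; linarith
  have hfix1 : H' (x₀ + 1) = x₀ + 1 := by rw [hper', hfix']
  -- iterates lift
  have hiterlift : ∀ (n : ℕ) (x : ℝ), (⇑τ)^[n] ((x:ℝ):S1) = ((H'^[n] x : ℝ) : S1) := by
    intro n
    induction n with
    | zero => simp
    | succ n ih =>
      intro x
      rw [Function.iterate_succ_apply, Function.iterate_succ_apply, hlift' x, ih]
  -- every point of the open fundamental interval is fixed by H'
  have hfixall : ∀ y ∈ Set.Ioo x₀ (x₀ + 1), H' y = y := by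
    intro y hy
    have hmem : ∀ n : ℕ, H'^[n] y ∈ Set.Ioo x₀ (x₀ + 1) := by
      intro n
      constructor
      · calc x₀ = H'^[n] x₀ := (Function.iterate_fixed hfix' n).symm
          _ < H'^[n] y := (hmono'.iterate n) hy.1
      · calc H'^[n] y < H'^[n] (x₀ + 1) := (hmono'.iterate n) hy.2
          _ = x₀ + 1 := Function.iterate_fixed hfix1 n
    have hk' : H'^[k] y = y := by
      have h2 : ((H'^[k] y : ℝ) : S1) = ((y:ℝ):S1) := by
        rw [← hiterlift, hiter]; rfl
      obtain ⟨j, hj⟩ := (QuotientAddGroup.eq (s := AddSubgroup.zmultiples (1:ℝ))).mp h2.symm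
      have hj' : H'^[k] y - y = j := by push_cast [zsmul_eq_mul] at hj; linarith
      have h3 := hmem k
      have : (j : ℝ) = 0 := by
        have := hy.1; have := hy.2; have := h3.1; have := h3.2
        have hj1 : (j:ℝ) < 1 := by linarith
        have hj2 : (-1:ℝ) < j := by linarith
        have hj1' : j < 1 := by exact_mod_cast hj1
        have hj2' : -1 < j := by exact_mod_cast hj2
        have : j = 0 := by omega
        exact_mod_cast this
      linarith [hj']
    rcases lt_trichotomy (H' y) y with h | h | h
    · exfalso
      have : ∀ n : ℕ, H'^[n + 1] y < y := by
        intro n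
        induction n with
        | zero => simpa using h
        | succ n ih =>
          calc H'^[n + 2] y = H' (H'^[n+1] y) := Function.iterate_succ_apply' _ _ _
            _ < H' y := hmono' ih
            _ < y := h
      obtain ⟨k', rfl⟩ := Nat.exists_eq_succ_of_ne_zero hk.ne'
      exact absurd hk' (ne_of_lt (this k'))
    · exact h
    · exfalso
      have : ∀ n : ℕ, y < H'^[n + 1] y := by
        intro n
        induction n with
        | zero => simpa using h
        | succ n ih =>
          calc y < H' y := h
            _ < H' (H'^[n+1] y) := hmono' ih
            _ = H'^[n + 2] y := (Function.iterate_succ_apply' _ _ _).symm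
      obtain ⟨k', rfl⟩ := Nat.exists_eq_succ_of_ne_zero hk.ne'
      exact absurd hk' (ne_of_gt (this k'))
  -- conclude
  funext z
  obtain ⟨t, ht, htz⟩ : ∃ t : ℝ, t ∈ Set.Ico x₀ (x₀ + 1) ∧ ((t:ℝ):S1) = z := by
    refine ⟨(AddCircle.equivIco 1 x₀ z : ℝ), ?_, (AddCircle.equivIco 1 x₀).symm_apply_apply z⟩
    exact (AddCircle.equivIco 1 x₀ z).2
  rcases eq_or_lt_of_le ht.1 with h | h
  · simp only [id_eq, ← htz, ← h, hlift', hfix']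
  · simp only [id_eq, ← htz, hlift', hfixall t ⟨h, ht.2⟩]

/-- if the unique minimal set of `f` is an arc, then every
orientation-preserving homeomorphism commuting with all the `f_α` has a fixed point
in the arc; in particular `f` admits no symmetry. -/
theorem arc_minimal_no_symmetry
    (ν : Measure Δ) [IsProbabilityMeasure ν] [ν.IsOpenPosMeasure]
    (f : RandomCircleHomeo Δ) (G : Set S1)
    (hmin : f.IsMinimal G) (huniq : ∀ G', f.IsMinimal G' → G' = G)
    (hconn : IsConnected G) (hproper : G ≠ Set.univ) (hnotpt : ∀ x : S1, G ≠ {x}) :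
    (∀ τ : S1 ≃ₜ S1, OrientationPreserving τ →
      (∀ α x, τ (f.homeo α x) = f.homeo α (τ x)) → ∃ x ∈ G, τ x = x) ∧
    ¬ ∃ τ : S1 ≃ₜ S1, IsSymmetry f τ := by
  have hcl : IsClosed G := hmin.1.1
  have hGne : G.Nonempty := hmin.2.1
  have main : ∀ τ : S1 ≃ₜ S1, (∀ α x, τ (f.homeo α x) = f.homeo α (τ x)) →
      ∃ x ∈ G, τ x = x := by
    intro τ hcomm
    have hτmin : f.IsMinimal (⇑τ '' G) := by
      refine ⟨⟨τ.isClosedMap G hcl, ?_⟩, hGne.image _, ?_⟩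
      · rintro α _ ⟨_, ⟨x, hx, rfl⟩, rfl⟩
        exact ⟨f.homeo α x, hmin.1.2 α ⟨x, hx, rfl⟩, hcomm α x⟩
      · intro G' hsub hinv hne'
        have h1 : (⇑τ ⁻¹' G') ⊆ G := by
          intro x hx
          obtain ⟨y, hyG, hyx⟩ := hsub hx
          rwa [← τ.injective hyx]
        have h2 : f.IsInvariant (⇑τ ⁻¹' G') := by
          refine ⟨hinv.1.preimage τ.continuous, fun α => ?_⟩
          rintro _ ⟨x, hx, rfl⟩
          show τ (f.homeo α x) ∈ G'
          rw [hcomm α x]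
          exact hinv.2 α ⟨τ x, hx, rfl⟩
        have h3 : (⇑τ ⁻¹' G').Nonempty := by
          obtain ⟨y, hy⟩ := hne'
          exact ⟨τ.symm y, by simpa using hy⟩
        have h4 := hmin.2.2 _ h1 h2 h3
        rw [← Set.image_preimage_eq G' τ.surjective, h4]
    have heq : ⇑τ '' G = G := huniq _ hτmin
    exact fixed_of_selfmap G hcl hGne hconn hproper τ τ.continuous
      (fun x hx => heq ▸ Set.mem_image_of_mem _ hx)
  constructor
  · exact fun τ _ hcomm => main τ hcomm
  · rintro ⟨τ, hOP, hne', ⟨k, hk, hiter⟩, hcomm⟩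
    obtain ⟨x, hxG, hfix⟩ := main τ hcomm
    exact hne' (op_finite_order_fixed_eq_id τ hOP k hk hiter x hfix)


end RandomCircle
end
end

section
/- Let f be a random circle homeomorphism. If S¹ is f-minimal, then for every n ∈ ℕ, S¹ is fⁿ-minimal, where fⁿ is the random map over (Δⁿ, ν^⊗n) given by fⁿ_{(α_0,…,α_{n−1})} = f_{α_{n−1}} ∘ ⋯ ∘ f_{α_0}. -/
open MeasureTheory Filter Topology Set
open scoped ENNReal

noncomputable section

namespace RandomCircle

variable {Δ : Type*} [TopologicalSpace Δ]

variable [MeasurableSpace Δ]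

variable {Δ : Type*} [TopologicalSpace Δ] [PolishSpace Δ] [ConnectedSpace Δ]
  [MeasurableSpace Δ] [BorelSpace Δ]

section IterAux

variable {Δ' : Type*} [TopologicalSpace Δ']

/-- One random step applied to a set, followed by topological closure. -/
def tstep (f : RandomCircleHomeo Δ') (B : Set S1) : Set S1 :=
  closure (⋃ α : Δ', f.homeo α '' B)

lemma monotone_tstep (f : RandomCircleHomeo Δ') : Monotone (tstep f) := by
  intro B C h
  exact closure_mono (Set.iUnion_mono fun α => Set.image_mono h)

lemma image_subset_tstep (f : RandomCircleHomeo Δ') (B : Set S1) (α : Δ') :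
    f.homeo α '' B ⊆ tstep f B :=
  (Set.subset_iUnion (fun α => f.homeo α '' B) α).trans subset_closure

lemma tstep_nonempty [Nonempty Δ'] (f : RandomCircleHomeo Δ') {B : Set S1}
    (h : B.Nonempty) : (tstep f B).Nonempty := by
  obtain ⟨x, hx⟩ := h
  obtain ⟨α⟩ := ‹Nonempty Δ'›
  exact ⟨f.homeo α x, image_subset_tstep f B α ⟨x, hx, rfl⟩⟩

lemma isClosed_tstep_iter (f : RandomCircleHomeo Δ') {A : Set S1} (hA : IsClosed A) :
    ∀ j, IsClosed ((tstep f)^[j] A)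
  | 0 => hA
  | (j + 1) => by
      rw [Function.iterate_succ_apply']
      exact isClosed_closure

lemma tstep_iter_nonempty [Nonempty Δ'] (f : RandomCircleHomeo Δ') {A : Set S1}
    (hA : A.Nonempty) : ∀ j, ((tstep f)^[j] A).Nonempty
  | 0 => hA
  | (j + 1) => by
      rw [Function.iterate_succ_apply']
      exact tstep_nonempty f (tstep_iter_nonempty f hA j)

lemma fwdFin_succ_apply (f : RandomCircleHomeo Δ') {j : ℕ} (a : Fin (j + 1) → Δ')
    (x : S1) :
    fwdFin f a x = f.homeo (a (Fin.last j)) (fwdFin f (fun i : Fin j => a i.castSucc) x) :=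
  rfl

lemma closure_iUnion_closure' {ι : Sort*} {X : Type*} [TopologicalSpace X]
    (s : ι → Set X) : closure (⋃ i, closure (s i)) = closure (⋃ i, s i) := by
  apply subset_antisymm
  · exact closure_minimal
      (Set.iUnion_subset fun i => closure_mono (Set.subset_iUnion s i)) isClosed_closure
  · exact closure_mono (Set.iUnion_mono fun i => subset_closure)

/-- Bridge between the step operator and compositions over finite tuples. -/
lemma tstep_iter_eq (f : RandomCircleHomeo Δ') {A : Set S1} (hA : IsClosed A) :
    ∀ j, (tstep f)^[j] A = closure (⋃ a : Fin j → Δ', fwdFin f a '' A)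
  | 0 => by
      simp only [Function.iterate_zero_apply]
      have h0 : (⋃ a : Fin 0 → Δ', fwdFin f a '' A) = A := by
        apply subset_antisymm
        · refine Set.iUnion_subset fun a => ?_
          rintro x ⟨y, hy, rfl⟩
          exact hy
        · intro x hx
          exact Set.mem_iUnion.2 ⟨Fin.elim0, ⟨x, hx, rfl⟩⟩
      rw [h0, hA.closure_eq]
  | (j + 1) => by
      rw [Function.iterate_succ_apply', tstep_iter_eq f hA j]
      show closure (⋃ α : Δ', f.homeo α '' closure (⋃ a : Fin j → Δ', fwdFin f a '' A)) = _
      have h1 : ∀ α : Δ', f.homeo α '' closure (⋃ a : Fin j → Δ', fwdFin f a '' A)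
          = closure (f.homeo α '' ⋃ a : Fin j → Δ', fwdFin f a '' A) := fun α =>
        Homeomorph.image_closure _ _
      simp only [h1]
      rw [closure_iUnion_closure']
      refine congrArg closure (subset_antisymm ?_ ?_)
      · refine Set.iUnion_subset fun α => ?_
        rintro x ⟨y, hy, rfl⟩
        obtain ⟨a, z, hz, rfl⟩ := Set.mem_iUnion.1 hy
        refine Set.mem_iUnion.2 ⟨Fin.snoc a α, ⟨z, hz, ?_⟩⟩
        rw [fwdFin_succ_apply]
        have ha : (fun i : Fin j => (Fin.snoc a α : Fin (j+1) → Δ') i.castSucc) = a :=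
          funext fun i => by simp
        rw [Fin.snoc_last, ha]
      · refine Set.iUnion_subset fun b => ?_
        rintro x ⟨z, hz, rfl⟩
        refine Set.mem_iUnion.2 ⟨b (Fin.last j), ?_⟩
        rw [fwdFin_succ_apply]
        exact ⟨fwdFin f (fun i : Fin j => b i.castSucc) z,
          Set.mem_iUnion.2 ⟨fun i : Fin j => b i.castSucc, ⟨z, hz, rfl⟩⟩, rfl⟩

end IterAux

/-- Proposition 3.1: if `S¹` is `f`-minimal then `S¹` is `fⁿ`-minimal
for every `n ∈ ℕ`. -/
theorem minimal_iterates
    (ν : Measure Δ) [IsProbabilityMeasure ν] [ν.IsOpenPosMeasure]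
    (f : RandomCircleHomeo Δ) (hmin : f.IsMinimal Set.univ) :
    ∀ n : ℕ, 0 < n → ∀ G : Set S1, IsClosed G → G.Nonempty →
      (∀ a : Fin n → Δ, fwdFin f a '' G ⊆ G) → G = Set.univ := by
  intro n hn G hGc hGne hG
  -- The collection of closed nonempty subsets of `G` invariant under all length-`n` words.
  set S : Set (Set S1) :=
    {A | A ⊆ G ∧ IsClosed A ∧ A.Nonempty ∧ ∀ a : Fin n → Δ, fwdFin f a '' A ⊆ A} with hS
  have hGS : G ∈ S := ⟨subset_rfl, hGc, hGne, hG⟩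
  -- Zorn's lemma: a minimal element `M` of `S`.
  have hzorn : ∀ c ⊆ S, IsChain (· ⊆ ·) c → c.Nonempty → ∃ lb ∈ S, ∀ s ∈ c, lb ⊆ s := by
    intro c hcS hchain hcne
    refine ⟨⋂₀ c, ⟨?_, ?_, ?_, ?_⟩, fun s hs => Set.sInter_subset_of_mem hs⟩
    · obtain ⟨s, hs⟩ := hcne
      exact (Set.sInter_subset_of_mem hs).trans (hcS hs).1
    · exact isClosed_sInter fun s hs => (hcS hs).2.1
    · haveI : Nonempty c := hcne.to_subtype
      have hdir : Directed (· ⊇ ·) (fun s : c => (s : Set S1)) := by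
        rintro ⟨s, hs⟩ ⟨t, ht⟩
        rcases hchain.total hs ht with h | h
        · exact ⟨⟨s, hs⟩, subset_rfl, h⟩
        · exact ⟨⟨t, ht⟩, h, subset_rfl⟩
      have hne := IsCompact.nonempty_iInter_of_directed_nonempty_isCompact_isClosed
        (fun s : c => (s : Set S1)) hdir (fun s => (hcS s.2).2.2.1)
        (fun s => ((hcS s.2).2.1).isCompact) (fun s => (hcS s.2).2.1)
      rwa [Set.sInter_eq_iInter]
    · intro a
      rintro x ⟨y, hy, rfl⟩
      exact Set.mem_sInter.2 fun s hs =>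
        (hcS hs).2.2.2 a ⟨y, Set.mem_sInter.1 hy s hs, rfl⟩
  obtain ⟨M, hMG, hMmin0⟩ := zorn_superset_nonempty S hzorn G hGS
  · obtain ⟨hMS, hMmin⟩ := hMmin0
    obtain ⟨hMG', hMc, hMne, hMinv⟩ := hMS
    have hMmin' : ∀ C ⊆ M, IsClosed C → C.Nonempty →
        (∀ a : Fin n → Δ, fwdFin f a '' C ⊆ C) → C = M := by
      intro C hCM hCc hCne hCinv
      exact subset_antisymm hCM (hMmin ⟨hCM.trans hMG', hCc, hCne, hCinv⟩ hCM)
    set T : Set S1 → Set S1 := tstep f with hT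
    have hHc : ∀ j, IsClosed (T^[j] M) := isClosed_tstep_iter f hMc
    have hHne : ∀ j, (T^[j] M).Nonempty := tstep_iter_nonempty f hMne
    -- `T^[n] A ⊆ A` for any closed `A` invariant under length-`n` words.
    have key : ∀ A : Set S1, IsClosed A → (∀ a : Fin n → Δ, fwdFin f a '' A ⊆ A) →
        T^[n] A ⊆ A := by
      intro A hAc hAinv
      rw [hT, tstep_iter_eq f hAc n]
      exact closure_minimal (Set.iUnion_subset hAinv) hAc
    have key2 : ∀ A : Set S1, IsClosed A → ∀ b : Fin n → Δ, fwdFin f b '' A ⊆ T^[n] A := by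
      intro A hAc b
      rw [hT, tstep_iter_eq f hAc n]
      exact (Set.subset_iUnion (fun a : Fin n → Δ => fwdFin f a '' A) b).trans subset_closure
    -- `T^[n] M = M`, by minimality.
    have hHnM : T^[n] M = M := by
      apply hMmin' _ (key M hMc hMinv) (hHc n) (hHne n)
      intro b
      exact (key2 _ (hHc n) b).trans
        (((monotone_tstep f).iterate n) (key M hMc hMinv))
    have hper : ∀ j, T^[j + n] M = T^[j] M := by
      intro j
      rw [Function.iterate_add_apply, hHnM]
    -- each `H j := T^[j] M` is invariant under length-`n` words
    have hHinv : ∀ (j : ℕ) (b : Fin n → Δ), fwdFin f b '' (T^[j] M) ⊆ T^[j] M := by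
      intro j b
      refine (key2 _ (hHc j) b).trans ?_
      rw [← Function.iterate_add_apply, Nat.add_comm, hper j]
    -- each `H j` for `j ≤ n` is minimal in `S`-sense
    have hHmin : ∀ j ≤ n, ∀ C ⊆ T^[j] M, IsClosed C → C.Nonempty →
        (∀ b : Fin n → Δ, fwdFin f b '' C ⊆ C) → C = T^[j] M := by
      intro j hj C hCH hCc hCne hCinv
      have hTnC : T^[n] C ⊆ C := key C hCc hCinv
      have h1 : T^[n - j] C ⊆ M := by
        have h := ((monotone_tstep f).iterate (n - j)) hCH
        rwa [← hT, ← Function.iterate_add_apply, Nat.sub_add_cancel hj, hHnM] at h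
      have h2 : T^[n - j] C = M := by
        apply hMmin' _ h1 (isClosed_tstep_iter f hCc _) (tstep_iter_nonempty f hCne _)
        intro b
        refine (key2 _ (isClosed_tstep_iter f hCc _) b).trans ?_
        rw [← Function.iterate_add_apply, Nat.add_comm, Function.iterate_add_apply]
        exact ((monotone_tstep f).iterate _) hTnC
      have h3 : T^[j] M ⊆ C := by
        rw [← h2, ← Function.iterate_add_apply, Nat.add_sub_cancel' hj]
        exact hTnC
      exact subset_antisymm hCH h3
    -- two of the `H j` are equal or disjoint
    have hdisj : ∀ i ≤ n, ∀ j ≤ n, (T^[i] M ∩ T^[j] M).Nonempty → T^[i] M = T^[j] M := by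
      intro i hi j hj hne
      have hinv : ∀ b : Fin n → Δ,
          fwdFin f b '' (T^[i] M ∩ T^[j] M) ⊆ T^[i] M ∩ T^[j] M := fun b =>
        (Set.image_inter_subset _ _ _).trans
          (Set.inter_subset_inter (hHinv i b) (hHinv j b))
      have hc : IsClosed (T^[i] M ∩ T^[j] M) := (hHc i).inter (hHc j)
      exact (hHmin i hi _ Set.inter_subset_left hc hne hinv).symm.trans
        (hHmin j hj _ Set.inter_subset_right hc hne hinv)
    -- the union of the `H j`, `j < n`, is a closed `f`-invariant nonempty set, hence `univ`
    have hcover : (⋃ j : Fin n, T^[j.1] M) = Set.univ := by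
      apply hmin.2.2 _ (Set.subset_univ _)
      · constructor
        · exact isClosed_iUnion_of_finite fun j => hHc j.1
        · intro α
          rw [Set.image_iUnion]
          refine Set.iUnion_subset fun j => ?_
          have h1 : f.homeo α '' (T^[j.1] M) ⊆ T^[j.1 + 1] M := by
            rw [Function.iterate_succ_apply']
            exact image_subset_tstep f _ α
          rcases lt_or_eq_of_le (Nat.succ_le_of_lt j.2) with h | h
          · exact h1.trans (Set.subset_iUnion (fun i : Fin n => T^[i.1] M) ⟨j.1 + 1, h⟩)
          · have h' : j.1 + 1 = n := h
            have h2 : T^[j.1 + 1] M = T^[(0 : ℕ)] M := by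
              rw [h', hHnM, Function.iterate_zero_apply]
            refine h1.trans ?_
            rw [h2]
            exact Set.subset_iUnion (fun i : Fin n => T^[i.1] M) ⟨0, hn⟩
      · obtain ⟨x, hx⟩ := hMne
        exact ⟨x, Set.mem_iUnion.2 ⟨⟨0, hn⟩, by simpa using hx⟩⟩
    -- therefore `M` is clopen, hence `M = univ` by connectedness of the circle
    have hMopen : IsOpen M := by
      rw [← isClosed_compl_iff]
      have hcompl : Mᶜ = ⋃ j : Fin n, ⋃ (_ : ¬ (T^[j.1] M ∩ M).Nonempty), T^[j.1] M := by
        apply subset_antisymm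
        · intro x hx
          have hx' : x ∈ ⋃ j : Fin n, T^[j.1] M := by rw [hcover]; trivial
          obtain ⟨j, hj⟩ := Set.mem_iUnion.1 hx'
          refine Set.mem_iUnion.2 ⟨j, Set.mem_iUnion.2 ⟨?_, hj⟩⟩
          intro hne
          have heq : T^[j.1] M = T^[(0 : ℕ)] M := by
            apply hdisj j.1 (le_of_lt j.2) 0 (Nat.zero_le n)
            simpa using hne
          rw [heq] at hj
          exact hx (by simpa using hj)
        · refine Set.iUnion_subset fun j => Set.iUnion_subset fun hdis => ?_
          intro x hx hxM
          exact hdis ⟨x, hx, hxM⟩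
      rw [hcompl]
      exact isClosed_iUnion_of_finite fun j =>
        isClosed_iUnion_of_finite fun _ => hHc j.1
    have hMuniv : M = Set.univ := IsClopen.eq_univ ⟨hMc, hMopen⟩ hMne
    exact Set.eq_univ_of_univ_subset (hMuniv ▸ hMG)

end RandomCircle
end
end

section
/- Let f be a random circle homeomorphism. If S¹ is f-minimal, then S¹ is also f^{−1}-minimal, where f^{−1} := (f_α^{−1})_{α∈Δ}. -/
open MeasureTheory Filter Topology Set
open scoped ENNReal

noncomputable section

namespace RandomCircle

variable {Δ : Type*} [TopologicalSpace Δ]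

variable [MeasurableSpace Δ]

variable {Δ : Type*} [TopologicalSpace Δ] [PolishSpace Δ] [ConnectedSpace Δ]
  [MeasurableSpace Δ] [BorelSpace Δ]


private lemma locallyConnected_S1 : LocallyConnectedSpace S1 := by
  rw [locallyConnectedSpace_iff_connected_subsets]
  intro x U hU
  obtain ⟨t, rfl⟩ := QuotientAddGroup.mk_surjective x
  have h1 : ((↑) : ℝ → S1) ⁻¹' U ∈ 𝓝 t :=
    (AddCircle.continuous_mk' 1).continuousAt.preimage_mem_nhds hU
  obtain ⟨V, hV, hVc, hVsub⟩ :=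
    locallyConnectedSpace_iff_connected_subsets.mp inferInstance t _ h1
  refine ⟨((↑) : ℝ → S1) '' V, QuotientAddGroup.isOpenMap_coe.image_mem_nhds hV,
    hVc.image _ (AddCircle.continuous_mk' 1).continuousOn, ?_⟩
  rintro _ ⟨s, hs, rfl⟩
  exact hVsub hs

/-- The frontier of an open preconnected subset of the circle is finite. -/
private lemma frontier_finite_of_isOpen_isPreconnected {V : Set S1}
    (hVo : IsOpen V) (hVc : IsPreconnected V) : (frontier V).Finite := by
  haveI : Fact ((0:ℝ) < 1) := ⟨one_pos⟩
  rcases Set.eq_empty_or_nonempty V with hVe | hVne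
  · simp [hVe]
  by_cases huniv : V = Set.univ
  · simp [huniv]
  obtain ⟨g, hg⟩ := (Set.ne_univ_iff_exists_notMem V).mp huniv
  obtain ⟨r, hrg⟩ := QuotientAddGroup.mk_surjective g
  have hecont : Continuous ((↑) : ℝ → S1) := AddCircle.continuous_mk' 1
  have heopen : IsOpenMap ((↑) : ℝ → S1) := QuotientAddGroup.isOpenMap_coe
  have hinj : ∀ s ∈ Set.Ico r (r+1), ∀ t ∈ Set.Ico r (r+1),
      ((s : ℝ) : S1) = ((t : ℝ) : S1) → s = t := fun s hs t ht h =>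
    (AddCircle.coe_eq_coe_iff_of_mem_Ico hs ht).mp h
  have hlift : ∀ y : S1, y ≠ g → ∃ t ∈ Set.Ioo r (r+1), ((t : ℝ) : S1) = y := by
    intro y hy
    have ht : (AddCircle.equivIco 1 r y : ℝ) ∈ Set.Ico r (r+1) := (AddCircle.equivIco 1 r y).2
    have hcoe : (((AddCircle.equivIco 1 r y : ℝ) : ℝ) : S1) = y := by
      have := (AddCircle.equivIco 1 r).symm_apply_apply y
      simpa [AddCircle.equivIco, QuotientAddGroup.equivIcoMod] using this
    refine ⟨(AddCircle.equivIco 1 r y : ℝ), ⟨lt_of_le_of_ne ht.1 ?_, ht.2⟩, hcoe⟩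
    intro hEq
    exact hy (by rw [← hcoe, ← hEq, hrg])
  set W : Set ℝ := {t : ℝ | t ∈ Set.Ioo r (r+1) ∧ ((t : ℝ) : S1) ∈ V} with hWdef
  have hWmem : ∀ {t : ℝ}, t ∈ W ↔ t ∈ Set.Ioo r (r+1) ∧ ((t : ℝ) : S1) ∈ V := Iff.rfl
  obtain ⟨v0, hv0⟩ := hVne
  obtain ⟨w0, hw0Ioo, hw0coe⟩ := hlift v0 (fun h => hg (h ▸ hv0))
  have hw0 : w0 ∈ W := ⟨hw0Ioo, hw0coe ▸ hv0⟩
  have hWne : W.Nonempty := ⟨w0, hw0⟩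
  have hbddb : BddBelow W := ⟨r, fun w hw => le_of_lt hw.1.1⟩
  have hbdda : BddAbove W := ⟨r+1, fun w hw => le_of_lt hw.1.2⟩
  -- Order-connectedness of W, from preconnectedness of V
  have hWicc : ∀ s ∈ W, ∀ t ∈ W, ∀ u, s ≤ u → u ≤ t → u ∈ W := by
    intro s hs t ht u hsu hut
    rcases eq_or_lt_of_le hsu with rfl | hsu
    · exact hs
    rcases eq_or_lt_of_le hut with rfl | hut
    · exact ht
    have huIoo : u ∈ Set.Ioo r (r+1) := ⟨lt_trans hs.1.1 hsu, lt_trans hut ht.1.2⟩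
    by_contra huW
    have huV : ((u : ℝ) : S1) ∉ V := fun h => huW ⟨huIoo, h⟩
    set A : Set S1 := ((↑) : ℝ → S1) '' Set.Ioo r u with hA
    set B : Set S1 := ((↑) : ℝ → S1) '' Set.Ioo u (r+1) with hB
    have hAo : IsOpen A := heopen _ isOpen_Ioo
    have hBo : IsOpen B := heopen _ isOpen_Ioo
    have hVAB : V ⊆ A ∪ B := by
      intro v hv
      obtain ⟨tv, htvIoo, htvcoe⟩ := hlift v (fun h => hg (h ▸ hv))
      have htvu : tv ≠ u := by
        intro h
        exact huV (by rw [← h, htvcoe]; exact hv)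
      rcases lt_or_gt_of_ne htvu with h | h
      · exact Or.inl ⟨tv, ⟨htvIoo.1, h⟩, htvcoe⟩
      · exact Or.inr ⟨tv, ⟨h, htvIoo.2⟩, htvcoe⟩
    have hVA : (V ∩ A).Nonempty :=
      ⟨((s : ℝ) : S1), hs.2, ⟨s, ⟨hs.1.1, hsu⟩, rfl⟩⟩
    have hVB : (V ∩ B).Nonempty :=
      ⟨((t : ℝ) : S1), ht.2, ⟨t, ⟨hut, ht.1.2⟩, rfl⟩⟩
    obtain ⟨z, hzV, hzA, hzB⟩ := hVc A B hAo hBo hVAB hVA hVB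
    obtain ⟨p, hp, hpz⟩ := hzA
    obtain ⟨q, hq, hqz⟩ := hzB
    have hpq : p = q := by
      refine hinj p ⟨le_of_lt hp.1, lt_trans hp.2 huIoo.2⟩ q
        ⟨le_of_lt (lt_trans huIoo.1 hq.1), hq.2⟩ ?_
      rw [hpz, hqz]
    rw [hpq] at hp
    exact absurd hq.1 (not_lt.mpr (le_of_lt hp.2))
  -- every frontier point comes from `sInf W`, `sSup W` or `g`
  have hfr : frontier V ⊆ {g, ((sInf W : ℝ) : S1), ((sSup W : ℝ) : S1)} := by
    intro y hy
    rw [hVo.frontier_eq] at hy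
    obtain ⟨hycl, hyV⟩ := hy
    by_cases hyg : y = g
    · exact Or.inl hyg
    obtain ⟨t, htIoo, htcoe⟩ := hlift y hyg
    have htW : t ∉ W := fun h => hyV (htcoe ▸ h.2)
    have htcl : t ∈ closure W := by
      rw [mem_closure_iff]
      intro o ho hto
      have hopen : IsOpen (((↑) : ℝ → S1) '' (o ∩ Set.Ioo r (r+1))) :=
        heopen _ (ho.inter isOpen_Ioo)
      have hymem : y ∈ ((↑) : ℝ → S1) '' (o ∩ Set.Ioo r (r+1)) :=
        ⟨t, ⟨hto, htIoo⟩, htcoe⟩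
      obtain ⟨v, ⟨sv, hsv, hsvcoe⟩, hvV⟩ :=
        (mem_closure_iff.mp hycl) _ hopen hymem
      exact ⟨sv, hsv.1, hsv.2, hsvcoe ▸ hvV⟩
    have hWIcc : W ⊆ Set.Icc (sInf W) (sSup W) :=
      fun w hw => ⟨csInf_le hbddb hw, le_csSup hbdda hw⟩
    have htIcc : t ∈ Set.Icc (sInf W) (sSup W) :=
      closure_minimal hWIcc isClosed_Icc htcl
    rcases eq_or_lt_of_le htIcc.1 with hEq | hlt
    · refine Or.inr (Or.inl ?_)
      rw [← htcoe, ← hEq]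
    rcases eq_or_lt_of_le htIcc.2 with hEq | hlt2
    · refine Or.inr (Or.inr ?_)
      rw [← htcoe, hEq]
      rfl
    obtain ⟨w1, hw1, hw1t⟩ := exists_lt_of_csInf_lt hWne hlt
    obtain ⟨w2, hw2, htw2⟩ := exists_lt_of_lt_csSup hWne hlt2
    exact absurd (hWicc w1 hw1 w2 hw2 t (le_of_lt hw1t) (le_of_lt htw2)) htW
  exact Set.Finite.subset ((Set.finite_singleton _).insert _ |>.insert _) hfr

/-- Lemma 3.4: if `S¹` is `f`-minimal then `S¹` is `f⁻¹`-minimal. -/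
theorem minimal_inverse
    (ν : Measure Δ) [IsProbabilityMeasure ν] [ν.IsOpenPosMeasure]
    (f : RandomCircleHomeo Δ) (hmin : f.IsMinimal Set.univ) :
    f.IsInvMinimal Set.univ := by
  have hDne : Nonempty Δ := by
    by_contra h
    rw [not_nonempty_iff] at h
    have h1 : ν Set.univ = 1 := measure_univ
    rw [Set.univ_eq_empty_iff.mpr h, measure_empty] at h1
    exact zero_ne_one h1
  obtain ⟨a0⟩ := hDne
  refine ⟨⟨isClosed_univ, fun α => Set.subset_univ _⟩, Set.univ_nonempty, ?_⟩
  intro G _ hGinv hGne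
  by_contra hGuniv
  obtain ⟨u₀, hu₀⟩ := (Set.ne_univ_iff_exists_notMem G).mp hGuniv
  have hGc : IsClosed G := hGinv.1
  set U : Set S1 := Gᶜ with hUdef
  have hUo : IsOpen U := hGc.isOpen_compl
  have hUinv : ∀ (α : Δ), ∀ z ∈ U, f.homeo α z ∈ U := by
    intro α z hz hfz
    exact hz (hGinv.2 α ⟨f.homeo α z, hfz, (f.homeo α).symm_apply_apply z⟩)
  have hu₀U : u₀ ∈ U := hu₀
  haveI : LocallyConnectedSpace S1 := locallyConnected_S1
  -- iterates of a fixed map, and the connected components of `U` containing them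
  set x : ℕ → S1 := fun k => (fun z => f.homeo a0 z)^[k] u₀ with hxdef
  have hxsucc : ∀ k, x (k+1) = f.homeo a0 (x k) := fun k =>
    Function.iterate_succ_apply' _ _ _
  have hxU : ∀ k, x k ∈ U := by
    intro k
    induction k with
    | zero => exact hu₀U
    | succ k ih => rw [hxsucc k]; exact hUinv _ _ ih
  set I : ℕ → Set S1 := fun k => connectedComponentIn U (x k) with hIdef
  have hIU : ∀ k, I k ⊆ U := fun k => connectedComponentIn_subset U (x k)
  have hIo : ∀ k, IsOpen (I k) := fun k => hUo.connectedComponentIn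
  have hmemI : ∀ k, x k ∈ I k := fun k => mem_connectedComponentIn (hxU k)
  -- every map sends `I k` into `I (k+1)`
  have hstep : ∀ (α : Δ) (k : ℕ), f.homeo α '' I k ⊆ I (k+1) := by
    intro α k
    have hcont : Continuous fun β : Δ => f.homeo β (x k) :=
      f.cont.comp (continuous_id.prodMk continuous_const)
    have hR : IsPreconnected (Set.range fun β : Δ => f.homeo β (x k)) :=
      isPreconnected_range hcont
    have hRU : (Set.range fun β : Δ => f.homeo β (x k)) ⊆ U := by
      rintro _ ⟨β, rfl⟩
      exact hUinv β _ (hxU k)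
    have hmem : f.homeo α (x k) ∈ I (k+1) := by
      have hsub := hR.subset_connectedComponentIn (x := x (k+1)) ⟨a0, (hxsucc k).symm⟩ hRU
      exact hsub ⟨α, rfl⟩
    have hA : IsPreconnected (f.homeo α '' I k) :=
      isPreconnected_connectedComponentIn.image _ (f.homeo α).continuous.continuousOn
    have hAU : f.homeo α '' I k ⊆ U := by
      rintro _ ⟨z, hz, rfl⟩
      exact hUinv α z (hIU k hz)
    have h1 : f.homeo α '' I k ⊆ connectedComponentIn U (f.homeo α (x k)) :=
      hA.subset_connectedComponentIn ⟨x k, hmemI k, rfl⟩ hAU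
    rwa [← connectedComponentIn_eq hmem] at h1
  -- words move `I k` into `I (k + length)`
  set step : S1 → Δ → S1 := fun z α => f.homeo α z with hstepdef
  have hfold : ∀ (l : List Δ) (k : ℕ) (z : S1), z ∈ I k →
      List.foldl step z l ∈ I (k + l.length) := by
    intro l
    induction l with
    | nil => intro k z hz; simpa using hz
    | cons α l ih =>
      intro k z hz
      have h1 : step z α ∈ I (k+1) := hstep α k ⟨z, hz, rfl⟩
      have h2 := ih (k+1) _ h1
      rw [List.foldl_cons]
      rw [show k + (α :: l).length = (k+1) + l.length by simp [List.length_cons]; omega]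
      exact h2
  -- the (strict) forward orbit of `u₀` is dense
  set O : Set S1 := {y | ∃ l : List Δ, l ≠ [] ∧ List.foldl step u₀ l = y} with hOdef
  have hOinv : ∀ α, f.homeo α '' O ⊆ O := by
    rintro α _ ⟨y, ⟨l, hl, rfl⟩, rfl⟩
    refine ⟨l ++ [α], by simp, ?_⟩
    rw [List.foldl_append]
    rfl
  have hOclinv : ∀ α, f.homeo α '' closure O ⊆ closure O := fun α =>
    (image_closure_subset_closure_image (f.homeo α).continuous).trans
      (closure_mono (hOinv α))
  have hOne : O.Nonempty := ⟨step u₀ a0, [a0], by simp, rfl⟩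
  have hOcl : closure O = Set.univ :=
    hmin.2.2 (closure O) (Set.subset_univ _) ⟨isClosed_closure, hOclinv⟩
      (hOne.mono subset_closure)
  have hdense : Dense O := by rw [dense_iff_closure_eq]; exact hOcl
  obtain ⟨y, hyO, hyI0⟩ := hdense.exists_mem_open (hIo 0) ⟨x 0, hmemI 0⟩
  obtain ⟨l, hlne, hly⟩ := hyO
  set n := l.length with hn
  have hn1 : 0 < n := List.length_pos_iff.mpr hlne
  have hyIn : y ∈ I n := by
    have hu₀I0 : u₀ ∈ I 0 := hmemI 0
    have := hfold l 0 u₀ hu₀I0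
    rw [hly] at this
    simpa using this
  have hI0n : I n = I 0 :=
    (connectedComponentIn_eq hyIn).trans (connectedComponentIn_eq hyI0).symm
  -- the union of the closures of `I 0, …, I (n-1)` is closed, invariant, hence all of `S¹`
  set S : Set S1 := ⋃ k ∈ Finset.range n, closure (I k) with hSdef
  have hScl : IsClosed S :=
    Set.Finite.isClosed_biUnion (Finset.finite_toSet _) (fun k _ => isClosed_closure)
  have hSne : S.Nonempty :=
    ⟨x 0, Set.mem_biUnion (Finset.mem_range.mpr hn1) (subset_closure (hmemI 0))⟩
  have hSinv : ∀ α, f.homeo α '' S ⊆ S := by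
    rintro α _ ⟨z, hz, rfl⟩
    simp only [hSdef, Set.mem_iUnion, Finset.mem_range, exists_prop] at hz ⊢
    obtain ⟨k, hk, hzk⟩ := hz
    have h1 : f.homeo α z ∈ closure (f.homeo α '' I k) :=
      image_closure_subset_closure_image (f.homeo α).continuous
        (Set.mem_image_of_mem _ hzk)
    have h2 : f.homeo α z ∈ closure (I (k+1)) := closure_mono (hstep α k) h1
    rcases lt_or_eq_of_le (Nat.succ_le_of_lt hk) with h | h
    · exact ⟨k+1, h, h2⟩
    · refine ⟨0, hn1, ?_⟩
      rw [← hI0n, ← h]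
      exact h2
  have hSuniv : S = Set.univ := hmin.2.2 S (Set.subset_univ _) ⟨hScl, hSinv⟩ hSne
  -- consequently `G` is contained in a finite union of finite frontiers
  have hGfin : G.Finite := by
    have hsub : G ⊆ ⋃ k ∈ Finset.range n, frontier (I k) := by
      intro g hgG
      have hgS : g ∈ S := by rw [hSuniv]; exact Set.mem_univ g
      simp only [hSdef, Set.mem_iUnion, Finset.mem_range, exists_prop] at hgS
      obtain ⟨k, hk, hgk⟩ := hgS
      simp only [Set.mem_iUnion, Finset.mem_range, exists_prop]
      refine ⟨k, hk, ?_⟩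
      rw [frontier, (hIo k).interior_eq]
      exact ⟨hgk, fun hgIk => (hIU k hgIk) hgG⟩
    exact Set.Finite.subset
      (Set.Finite.biUnion (Finset.finite_toSet _) fun k _ =>
        frontier_finite_of_isOpen_isPreconnected (hIo k) isPreconnected_connectedComponentIn)
      hsub
  -- a finite backward-invariant set is forward invariant
  have hGsymm : ∀ α, (f.homeo α).symm '' G = G := by
    intro α
    refine Set.eq_of_subset_of_ncard_le (hGinv.2 α)
      (le_of_eq (Set.ncard_image_of_injective G (f.homeo α).symm.injective).symm) hGfin
  have hGfwd : ∀ α, f.homeo α '' G ⊆ G := by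
    intro α
    have h2 : f.homeo α '' G = G := by
      conv_lhs => rw [← hGsymm α]
      rw [Set.image_image]
      simp only [Homeomorph.apply_symm_apply, Set.image_id']
    exact h2.subset
  have hGU : G = Set.univ := hmin.2.2 G (Set.subset_univ _) ⟨hGc, hGfwd⟩ hGne
  exact hu₀ (hGU ▸ Set.mem_univ u₀)

end RandomCircle
end
end

section
/- Let (Ω, F, ℙ) be a probability space with a measure-preserving map θ such that ℙ is ergodic with respect to θ. Let (X, +) be a compact metrisable abelian topological group with Haar probability measure λ, let r: Ω → X be measurable, and define Θ: Ω × X → Ω × X by Θ(ω,x) = (θω, x + r(ω)). If ℙ ⊗ λ is ergodic with respect to Θ, then ℙ ⊗ λ is the only Θ-invariant probability measure on Ω × X whose Ω-marginal is ℙ. -/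
open MeasureTheory Filter Topology Set
open scoped ENNReal

noncomputable section

namespace RandomCircle

variable {Δ : Type*} [TopologicalSpace Δ]

variable [MeasurableSpace Δ]

open scoped NNReal

section UniqueAux

variable {α : Type*} [MeasurableSpace α]

private lemma measurable_birkhoffAverage' {T : α → α} (hT : Measurable T)
    {F : α → ℝ} (hF : Measurable F) (n : ℕ) :
    Measurable (birkhoffAverage ℝ T F n) := by
  have : birkhoffAverage ℝ T F n
      = fun x => (n : ℝ)⁻¹ * ∑ k ∈ Finset.range n, F (T^[k] x) := rfl
  rw [this]
  exact (Finset.measurable_sum _ fun k _ => hF.comp (hT.iterate k)).const_mul _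

private lemma abs_birkhoffAverage_le' (T : α → α) (F : α → ℝ) {C : ℝ}
    (hC : ∀ x, |F x| ≤ C) (hC0 : 0 ≤ C) (n : ℕ) (x : α) :
    |birkhoffAverage ℝ T F n x| ≤ C := by
  rcases Nat.eq_zero_or_pos n with rfl | hn
  · simpa [birkhoffAverage] using hC0
  · have h1 : |birkhoffSum T F n x| ≤ n * C := by
      have h : birkhoffSum T F n x = ∑ k ∈ Finset.range n, F (T^[k] x) := rfl
      rw [h]
      calc |∑ k ∈ Finset.range n, F (T^[k] x)|
          ≤ ∑ k ∈ Finset.range n, |F (T^[k] x)| := Finset.abs_sum_le_sum_abs _ _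
        _ ≤ ∑ _k ∈ Finset.range n, C := Finset.sum_le_sum fun k _ => hC _
        _ = n * C := by simp [Finset.sum_const, nsmul_eq_mul]
    have h2 : birkhoffAverage ℝ T F n x = (n : ℝ)⁻¹ • birkhoffSum T F n x := rfl
    have hn' : (0:ℝ) < n := by exact_mod_cast hn
    rw [h2, smul_eq_mul, abs_mul, abs_inv, abs_of_nonneg hn'.le, inv_mul_le_iff₀ hn']
    calc |birkhoffSum T F n x| ≤ n * C := h1
      _ ≤ n * C := le_rfl
    
private lemma integral_birkhoffAverage_eq' {T : α → α} (hT : Measurable T)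
    {F : α → ℝ} (hFm : Measurable F) {C : ℝ} (hC : ∀ x, |F x| ≤ C)
    (ν : Measure α) [IsProbabilityMeasure ν] (hinv : ν.map T = ν) {n : ℕ} (hn : 1 ≤ n) :
    ∫ x, birkhoffAverage ℝ T F n x ∂ν = ∫ x, F x ∂ν := by
  have hmapk : ∀ k : ℕ, ν.map T^[k] = ν := by
    intro k; induction k with
    | zero => simpa using Measure.map_id
    | succ k ih =>
      rw [Function.iterate_succ', ← Measure.map_map hT (hT.iterate k), ih, hinv]
  have hint : ∀ k : ℕ, Integrable (fun x => F (T^[k] x)) ν := fun k =>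
    (integrable_const C).mono' ((hFm.comp (hT.iterate k)).aestronglyMeasurable)
      (Filter.Eventually.of_forall fun x => by
        simpa [Real.norm_eq_abs] using hC (T^[k] x))
  have hFk : ∀ k : ℕ, ∫ x, F (T^[k] x) ∂ν = ∫ x, F x ∂ν := by
    intro k
    have h := integral_map (φ := T^[k]) (μ := ν) (hT.iterate k).aemeasurable
      (f := F) (by rw [hmapk k]; exact hFm.aestronglyMeasurable)
    rw [hmapk k] at h
    exact h.symm
  have hdef : (fun x => birkhoffAverage ℝ T F n x)
      = fun x => (n : ℝ)⁻¹ • ∑ k ∈ Finset.range n, F (T^[k] x) := rfl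
  rw [hdef, integral_smul, integral_finset_sum _ fun k _ => hint k,
    Finset.sum_congr rfl fun k _ => hFk k, Finset.sum_const, Finset.card_range,
    nsmul_eq_mul, smul_eq_mul]
  have hne : (n : ℝ) ≠ 0 := Nat.cast_ne_zero.mpr (by omega)
  field_simp

set_option synthInstance.maxHeartbeats 1000000 in
set_option maxHeartbeats 1000000 in
private theorem core_mean_ergodic (m : Measure α) [IsProbabilityMeasure m]
    {T : α → α} (hT : Ergodic T m) {F : α → ℝ}
    (hF2 : MemLp F 2 m) :
    ∃ ns : ℕ → ℕ, StrictMono ns ∧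
      ∀ᵐ x ∂m, Tendsto (fun k => birkhoffAverage ℝ T F (ns k) x) atTop
        (𝓝 (∫ x, F x ∂m)) := by
  set E := Lp ℝ 2 m with hE
  let L : E →ₗᵢ[ℝ] E := Lp.compMeasurePreservingₗᵢ ℝ T hT.toMeasurePreserving
  let U : E →L[ℝ] E := L.toContinuousLinearMap
  have hUnorm : ‖U‖ ≤ 1 := L.norm_toContinuousLinearMap_le
  have hUae : ∀ g : E, ⇑(U g) =ᵐ[m] ⇑g ∘ T := fun g =>
    Lp.coeFn_compMeasurePreserving g hT.toMeasurePreserving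
  set Fhat : E := hF2.toLp F with hFhat
  have Main := U.tendsto_birkhoffAverage_orthogonalProjection hUnorm Fhat
  set G : E := ((LinearMap.eqLocus (U : E →ₗ[ℝ] E) ((1 : E →L[ℝ] E) : E →ₗ[ℝ] E)).orthogonalProjectionOnto Fhat : E) with hG
  -- G is a fixed point of U
  have hGfix : U G = G := by
    have h := LinearMap.mem_eqLocus.mp
      (SetLike.coe_mem ((LinearMap.eqLocus (U : E →ₗ[ℝ] E) ((1 : E →L[ℝ] E) : E →ₗ[ℝ] E)).orthogonalProjectionOnto Fhat))
    exact h
  -- G is a.e. constant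
  have hGT : ⇑G ∘ T =ᵐ[m] ⇑G := by
    refine ((hUae G).symm.trans ?_).symm.symm
    rw [hGfix]
  obtain ⟨c, hc⟩ : ∃ c, ⇑G =ᵐ[m] Function.const α c :=
    hT.ae_eq_const_of_ae_eq_comp_ae (Lp.aestronglyMeasurable G) hGT
  -- the linear functional `inner 1`
  set oneLp : E := (memLp_const (1 : ℝ)).toLp (fun _ => (1 : ℝ)) with hone
  set I : E → ℝ := fun g => @inner ℝ _ _ oneLp g with hI
  have hIint : ∀ g : E, I g = ∫ x, g x ∂m := by
    intro g
    have h1 : ⇑oneLp =ᵐ[m] fun _ => (1 : ℝ) := MemLp.coeFn_toLp _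
    calc I g = ∫ x, (oneLp x) * (g x) ∂m := by
          rw [hI]; simp only [MeasureTheory.L2.inner_def]
          exact (MeasureTheory.L2.inner_def _ _).trans
            (integral_congr_ae (Filter.Eventually.of_forall fun x => by simp [mul_comm]))
      _ = ∫ x, g x ∂m := by
          refine integral_congr_ae ?_
          filter_upwards [h1] with x hx
          rw [hx]; ring
  have hIcont : Continuous I := continuous_const.inner continuous_id
  have hIU : ∀ g : E, I (U g) = I g := by
    intro g
    rw [hIint, hIint]
    have h1 : ∫ x, (U g) x ∂m = ∫ x, (⇑g ∘ T) x ∂m := integral_congr_ae (hUae g)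
    rw [h1]
    have h2 := integral_map (φ := T) (μ := m) (f := ⇑g)
      hT.toMeasurePreserving.measurable.aemeasurable
      (by rw [hT.toMeasurePreserving.map_eq]; exact Lp.aestronglyMeasurable g)
    rw [hT.toMeasurePreserving.map_eq] at h2
    exact h2.symm
  have hIiter : ∀ k : ℕ, I (U^[k] Fhat) = I Fhat := by
    intro k; induction k with
    | zero => simp
    | succ k ih => rw [Function.iterate_succ_apply', hIU, ih]
  have hIbirk : ∀ n : ℕ, 1 ≤ n → I (birkhoffAverage ℝ U _root_.id n Fhat) = I Fhat := by
    intro n hn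
    have hsum : birkhoffSum U _root_.id n Fhat = ∑ k ∈ Finset.range n, U^[k] Fhat := by
      simp [birkhoffSum]
    rw [birkhoffAverage, hsum, hI]
    simp only [inner_smul_right, inner_sum]
    have h : ∀ k ∈ Finset.range n, @inner ℝ _ _ oneLp (U^[k] Fhat) = I Fhat :=
      fun k _ => hIiter k
    rw [Finset.sum_congr rfl h, Finset.sum_const, Finset.card_range, nsmul_eq_mul]
    have hn' : (n : ℝ) ≠ 0 := Nat.cast_ne_zero.mpr (by omega)
    field_simp
    rfl
  have hIG : I G = I Fhat := by
    have h1 : Tendsto (fun n => I (birkhoffAverage ℝ U _root_.id n Fhat)) atTop (𝓝 (I G)) :=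
      (hIcont.tendsto G).comp Main
    have h2 : (fun n => I (birkhoffAverage ℝ U _root_.id n Fhat)) =ᶠ[atTop]
        (fun _ => I Fhat) := by
      filter_upwards [eventually_ge_atTop 1] with n hn using hIbirk n hn
    exact tendsto_nhds_unique (h1.congr' h2) tendsto_const_nhds
  -- identify the constant
  have hcval : c = ∫ x, F x ∂m := by
    have h1 : I G = c := by
      rw [hIint]
      rw [integral_congr_ae hc]
      simp
    have h2 : I Fhat = ∫ x, F x ∂m := by
      rw [hIint]
      exact integral_congr_ae (MemLp.coeFn_toLp hF2)
    rw [← h1, hIG, h2]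
  -- subsequence converging a.e.
  have hmeas : TendstoInMeasure m
      (fun n => ⇑(birkhoffAverage ℝ U _root_.id n Fhat)) atTop ⇑G :=
    tendstoInMeasure_of_tendsto_Lp Main
  obtain ⟨ns, hns_mono, hns⟩ := hmeas.exists_seq_tendsto_ae
  -- identify coeFn of Lp Birkhoff averages with pointwise Birkhoff averages
  have hUk : ∀ k : ℕ, ⇑(U^[k] Fhat) =ᵐ[m] F ∘ T^[k] := by
    intro k; induction k with
    | zero => simpa using MemLp.coeFn_toLp hF2
    | succ k ih =>
      rw [Function.iterate_succ_apply']
      refine (hUae _).trans ?_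
      have h : ⇑(U^[k] Fhat) ∘ T =ᵐ[m] (F ∘ T^[k]) ∘ T := by
        refine ae_eq_comp hT.toMeasurePreserving.measurable.aemeasurable ?_
        rwa [hT.toMeasurePreserving.map_eq]
      refine h.trans ?_
      rw [Function.comp_assoc, ← Function.iterate_succ]
  have hsumk : ∀ n : ℕ, ⇑(birkhoffSum U _root_.id n Fhat) =ᵐ[m] birkhoffSum T F n := by
    intro n; induction n with
    | zero =>
      have h0 : birkhoffSum U _root_.id 0 Fhat = 0 := by simp [birkhoffSum]
      rw [h0]
      refine (Lp.coeFn_zero _ _ _).trans ?_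
      have h1 : birkhoffSum T F 0 = fun _ => (0:ℝ) := by
        funext x; simp [birkhoffSum]
      rw [h1]
      exact Filter.Eventually.of_forall fun x => rfl
    | succ n ih =>
      have h1 : birkhoffSum U _root_.id (n+1) Fhat
          = birkhoffSum U _root_.id n Fhat + U^[n] Fhat := by
        have := birkhoffSum_succ U _root_.id n Fhat
        simpa using this
      rw [h1]
      refine (Lp.coeFn_add _ _).trans ?_
      filter_upwards [ih, hUk n] with x hx1 hx2
      simp only [Pi.add_apply, hx1, hx2]
      rw [birkhoffSum_succ]
      rfl
  have hcoe : ∀ n : ℕ,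
      ⇑(birkhoffAverage ℝ U _root_.id n Fhat) =ᵐ[m] birkhoffAverage ℝ T F n := by
    intro n
    rw [birkhoffAverage]
    refine (Lp.coeFn_smul _ _).trans ?_
    filter_upwards [hsumk n] with x hx
    simp only [Pi.smul_apply, hx]
    rfl
  refine ⟨ns, hns_mono, ?_⟩
  have hall : ∀ᵐ x ∂m, ∀ n : ℕ, (⇑(birkhoffAverage ℝ (⇑U) _root_.id n Fhat)) x
      = birkhoffAverage ℝ T F n x := by
    rw [ae_all_iff]; exact fun n => hcoe n
  filter_upwards [hns, hall, hc] with x hx1 hx2 hx3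
  have h4 : (fun k => birkhoffAverage ℝ T F (ns k) x)
      = fun k => (⇑(birkhoffAverage ℝ (⇑U) _root_.id (ns k) Fhat)) x := by
    funext k; rw [hx2]
  rw [h4]
  have h5 : G x = ∫ x, F x ∂m := by rw [hx3, ← hcval]; rfl
  rw [← h5]
  exact hx1

private lemma stepA
    {Ω : Type*} [MeasurableSpace Ω] (P : Measure Ω) [IsProbabilityMeasure P]
    (θ : Ω → Ω)
    {X : Type*} [TopologicalSpace X] [CompactSpace X] [TopologicalSpace.MetrizableSpace X]
    [AddCommGroup X] [IsTopologicalAddGroup X] [MeasurableSpace X] [BorelSpace X]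
    (lam : Measure X) [IsProbabilityMeasure lam] [lam.IsAddHaarMeasure]
    (r : Ω → X)
    (hErg : Ergodic (fun p : Ω × X => (θ p.1, p.2 + r p.1)) (P.prod lam))
    (μ : Measure (Ω × X)) [IsProbabilityMeasure μ] (hfst : μ.map Prod.fst = P)
    (hinv : μ.map (fun p : Ω × X => (θ p.1, p.2 + r p.1)) = μ)
    {E : Set Ω} (hE : MeasurableSet E) {u : X → ℝ} (hu : Continuous u) :
    ∫ p, E.indicator (1 : Ω → ℝ) p.1 * u p.2 ∂μ = (P E).toReal * ∫ x, u x ∂lam := by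
  set T : Ω × X → Ω × X := fun p => (θ p.1, p.2 + r p.1) with hTdef
  have hTm : Measurable T := hErg.toMeasurePreserving.measurable
  -- bound on u
  obtain ⟨x0, -, hx0⟩ := isCompact_univ.exists_isMaxOn univ_nonempty hu.norm.continuousOn
  set C := ‖u x0‖ with hCdef
  have hC0 : 0 ≤ C := norm_nonneg _
  have hub : ∀ x, |u x| ≤ C := fun x => by
    have hx := hx0 (mem_univ x)
    simp only [mem_setOf_eq, Real.norm_eq_abs] at hx
    rw [hCdef, Real.norm_eq_abs]
    exact hx
  set F : Ω × X → ℝ := fun p => E.indicator (1 : Ω → ℝ) p.1 * u p.2 with hFdef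
  have hFm : Measurable F :=
    ((measurable_one.indicator hE).comp measurable_fst).mul (hu.measurable.comp measurable_snd)
  have hFb : ∀ p, |F p| ≤ C := by
    intro p
    have h1 : |E.indicator (1 : Ω → ℝ) p.1| ≤ 1 := by
      by_cases h : p.1 ∈ E <;> simp [Set.indicator_of_mem, Set.indicator_of_notMem, h]
    calc |F p| = |E.indicator (1 : Ω → ℝ) p.1| * |u p.2| := abs_mul _ _
      _ ≤ 1 * C := mul_le_mul h1 (hub _) (abs_nonneg _) one_pos.le
      _ = C := one_mul C
  have hF2 : MemLp F 2 (P.prod lam) :=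
    MemLp.of_bound hFm.aestronglyMeasurable C
      (Filter.Eventually.of_forall fun p => by simpa [Real.norm_eq_abs] using hFb p)
  obtain ⟨ns, hns_mono, hbirk⟩ := core_mean_ergodic (P.prod lam) hErg hF2
  set c₀ : ℝ := ∫ q, F q ∂(P.prod lam) with hc₀
  have hc₀val : c₀ = (P E).toReal * ∫ x, u x ∂lam := by
    rw [hc₀, hFdef]
    rw [integral_prod_mul (fun ω => E.indicator (1 : Ω → ℝ) ω) u]
    rw [integral_indicator_one hE]
    rfl
  -- translations
  have hTg : ∀ g : X, Measurable (fun p : Ω × X => (p.1, p.2 + g)) :=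
    fun g => measurable_fst.prodMk (measurable_snd.add_const g)
  have hS' : Measurable (fun q : (Ω × X) × X => (q.1.1, q.1.2 + q.2)) :=
    measurable_fst.fst.prodMk (measurable_fst.snd.add measurable_snd)
  have hμfstset : ∀ s : Set Ω, MeasurableSet s → μ (s ×ˢ (univ : Set X)) = P s := by
    intro s hs
    rw [← hfst, Measure.map_apply measurable_fst hs, Set.prod_univ]
  have hmapS : Measure.map (fun q : (Ω × X) × X => (q.1.1, q.1.2 + q.2)) (μ.prod lam)
      = P.prod lam := by
    refine (Measure.prod_eq fun s t hs ht => ?_).symm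
    rw [Measure.map_apply hS' (hs.prod ht), Measure.prod_apply (hS' (hs.prod ht))]
    have hslice : ∀ p : Ω × X,
        lam (Prod.mk p ⁻¹' ((fun q : (Ω × X) × X => (q.1.1, q.1.2 + q.2)) ⁻¹' s ×ˢ t))
        = Set.indicator (s ×ˢ (univ : Set X)) (fun _ => lam t) p := by
      intro p
      by_cases h : p.1 ∈ s
      · have he : Prod.mk p ⁻¹' ((fun q : (Ω × X) × X => (q.1.1, q.1.2 + q.2)) ⁻¹' s ×ˢ t)
            = (fun g => p.2 + g) ⁻¹' t := by
          ext g; simp [h]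
        rw [he, measure_preimage_add,
          Set.indicator_of_mem (by simp [h] : p ∈ s ×ˢ (univ : Set X))]
      · have he : Prod.mk p ⁻¹' ((fun q : (Ω × X) × X => (q.1.1, q.1.2 + q.2)) ⁻¹' s ×ˢ t)
            = (∅ : Set X) := by
          ext g; simp [h]
        rw [he, Set.indicator_of_notMem (by simp [h])]
        simp
    rw [lintegral_congr hslice, lintegral_indicator (hs.prod MeasurableSet.univ) _,
      setLIntegral_const, hμfstset s hs, mul_comm]
  -- transfer the a.e. convergence
  have h1 : ∀ᵐ q ∂(Measure.map (fun q : (Ω × X) × X => (q.1.1, q.1.2 + q.2)) (μ.prod lam)),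
      Tendsto (fun k => birkhoffAverage ℝ T F (ns k) q) atTop (𝓝 c₀) := by
    rw [hmapS]; exact hbirk
  have h2 : ∀ᵐ z ∂(μ.prod lam),
      Tendsto (fun k => birkhoffAverage ℝ T F (ns k) (z.1.1, z.1.2 + z.2)) atTop (𝓝 c₀) :=
    ae_of_ae_map hS'.aemeasurable h1
  have h3 : ∀ᵐ w ∂(lam.prod μ),
      Tendsto (fun k => birkhoffAverage ℝ T F (ns k) (w.2.1, w.2.2 + w.1)) atTop (𝓝 c₀) := by
    have hswap : μ.prod lam = Measure.map Prod.swap (lam.prod μ) := Measure.prod_swap.symm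
    rw [hswap] at h2
    exact ae_of_ae_map measurable_swap.aemeasurable h2
  have h4 : ∀ᵐ g ∂lam, ∀ᵐ p ∂μ,
      Tendsto (fun k => birkhoffAverage ℝ T F (ns k) (p.1, p.2 + g)) atTop (𝓝 c₀) :=
    Measure.ae_ae_of_ae_prod h3
  set h : X → ℝ := fun g => ∫ p, F (p.1, p.2 + g) ∂μ with hh
  have hhae : ∀ᵐ g ∂lam, h g = c₀ := by
    filter_upwards [h4] with g hg
    set μg : Measure (Ω × X) := μ.map (fun p : Ω × X => (p.1, p.2 + g)) with hμg
    haveI : IsProbabilityMeasure μg := Measure.isProbabilityMeasure_map (hTg g).aemeasurable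
    have hcomm : T ∘ (fun p : Ω × X => (p.1, p.2 + g))
        = (fun p : Ω × X => (p.1, p.2 + g)) ∘ T := by
      funext p
      show (θ p.1, p.2 + g + r p.1) = (θ p.1, p.2 + r p.1 + g)
      rw [add_right_comm]
    have hμginv : μg.map T = μg := by
      rw [hμg, Measure.map_map hTm (hTg g), hcomm, ← Measure.map_map (hTg g) hTm, hinv]
    have hkey : ∀ n, 1 ≤ n → ∫ p, birkhoffAverage ℝ T F n (p.1, p.2 + g) ∂μ = h g := by
      intro n hn
      have e1 : ∫ p, birkhoffAverage ℝ T F n (p.1, p.2 + g) ∂μ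
          = ∫ q, birkhoffAverage ℝ T F n q ∂μg := by
        rw [hμg]
        exact (integral_map (hTg g).aemeasurable
          ((measurable_birkhoffAverage' hTm hFm n).aestronglyMeasurable)).symm
      have e2 := integral_birkhoffAverage_eq' hTm hFm hFb μg hμginv hn
      have e3 : ∫ q, F q ∂μg = h g := by
        rw [hμg]
        exact integral_map (hTg g).aemeasurable hFm.aestronglyMeasurable
      rw [e1, e2, e3]
    have hdct : Tendsto (fun k => ∫ p, birkhoffAverage ℝ T F (ns k) (p.1, p.2 + g) ∂μ)
        atTop (𝓝 (∫ (_ : Ω × X), c₀ ∂μ)) := by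
      refine tendsto_integral_of_dominated_convergence (fun _ => C)
        (fun k => ((measurable_birkhoffAverage' hTm hFm (ns k)).comp
          (hTg g)).aestronglyMeasurable)
        (integrable_const C)
        (fun k => Filter.Eventually.of_forall fun p => by
          simpa [Real.norm_eq_abs] using abs_birkhoffAverage_le' T F hFb hC0 (ns k) (p.1, p.2 + g))
        ?_
      exact hg
    have hconst : ∫ (_ : Ω × X), c₀ ∂μ = c₀ := by simp
    rw [hconst] at hdct
    have heq : (fun k => ∫ p, birkhoffAverage ℝ T F (ns k) (p.1, p.2 + g) ∂μ)
        =ᶠ[atTop] fun _ => h g := by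
      filter_upwards [eventually_ge_atTop 1] with k hk
      exact hkey (ns k) (le_trans hk (hns_mono.le_apply))
    exact (tendsto_nhds_unique (hdct.congr' heq) tendsto_const_nhds).symm
  have hhcont : Continuous h := by
    rw [hh]
    refine continuous_of_dominated (fun g => (hFm.comp (hTg g)).aestronglyMeasurable)
      (fun g => Filter.Eventually.of_forall fun p => by
        simpa [Real.norm_eq_abs] using hFb (p.1, p.2 + g))
      (integrable_const C)
      (Filter.Eventually.of_forall fun p => ?_)
    have he : (fun g => F (p.1, p.2 + g)) = fun g => E.indicator (1 : Ω → ℝ) p.1 * u (p.2 + g) :=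
      rfl
    rw [he]
    exact continuous_const.mul (hu.comp (continuous_const.add continuous_id))
  have hfinal : h = fun _ => c₀ :=
    (Continuous.ae_eq_iff_eq lam hhcont continuous_const).mp hhae
  have h0 := congrFun hfinal 0
  rw [hh] at h0
  simp only at h0
  have h0' : ∫ p, F p ∂μ = c₀ := by
    rw [← h0]
    refine integral_congr_ae (Filter.Eventually.of_forall fun p => ?_)
    simp
  exact h0'.trans hc₀val

end UniqueAux

/-- Proposition 3.12, Quas: for an ergodic skew-product rotation over
an ergodic base, the product of the base measure with Haar measure is the unique
invariant measure with the given marginal. -/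
theorem unique_invariant_measure_skew_rotation
    {Ω : Type*} [MeasurableSpace Ω] (P : Measure Ω) [IsProbabilityMeasure P]
    (θ : Ω → Ω) (hθ : Ergodic θ P)
    {X : Type*} [TopologicalSpace X] [CompactSpace X] [TopologicalSpace.MetrizableSpace X]
    [AddCommGroup X] [IsTopologicalAddGroup X] [MeasurableSpace X] [BorelSpace X]
    (lam : Measure X) [IsProbabilityMeasure lam] [lam.IsAddHaarMeasure]
    (r : Ω → X) (hr : Measurable r)
    (hErg : Ergodic (fun p : Ω × X => (θ p.1, p.2 + r p.1)) (P.prod lam)) :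
    ∀ μ : Measure (Ω × X), IsProbabilityMeasure μ → μ.map Prod.fst = P →
      μ.map (fun p : Ω × X => (θ p.1, p.2 + r p.1)) = μ → μ = P.prod lam := by
  intro μ hμprob hfst hinv
  haveI := hμprob
  refine (Measure.prod_eq fun E B hE hB => ?_).symm
  set νE : Measure X := Measure.map Prod.snd (μ.restrict (E ×ˢ (univ : Set X))) with hνE
  haveI : IsFiniteMeasure νE := by
    constructor
    rw [hνE, Measure.map_apply measurable_snd MeasurableSet.univ]
    simp only [Set.preimage_univ, Measure.restrict_apply_univ]
    exact measure_lt_top μ _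
  have hext : νE = (P E) • lam := by
    refine ext_of_forall_lintegral_eq_of_IsFiniteMeasure fun f => ?_
    set u : X → ℝ := fun x => ((f x : ℝ≥0) : ℝ) with hu_def
    have hu : Continuous u := NNReal.continuous_coe.comp f.continuous
    have hu0 : ∀ x, 0 ≤ u x := fun x => (f x).2
    have hum : Measurable u := hu.measurable
    obtain ⟨x0, -, hx0⟩ := isCompact_univ.exists_isMaxOn univ_nonempty hu.continuousOn
    have hbound : ∀ x, ‖u x‖ ≤ u x0 := fun x => by
      rw [Real.norm_of_nonneg (hu0 x)]; exact hx0 (mem_univ x)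
    have hint1 : Integrable u νE :=
      (integrable_const (u x0)).mono' hum.aestronglyMeasurable (.of_forall hbound)
    have hint2 : Integrable u lam :=
      (integrable_const (u x0)).mono' hum.aestronglyMeasurable (.of_forall hbound)
    have hl1 : ∫⁻ x, (f x : ℝ≥0∞) ∂νE = ENNReal.ofReal (∫ x, u x ∂νE) :=
      lintegral_coe_eq_integral _ hint1
    have hl2 : ∫⁻ x, (f x : ℝ≥0∞) ∂lam = ENNReal.ofReal (∫ x, u x ∂lam) :=
      lintegral_coe_eq_integral _ hint2
    have hIνE : ∫ x, u x ∂νE = ∫ p, E.indicator (1 : Ω → ℝ) p.1 * u p.2 ∂μ := by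
      rw [hνE, integral_map measurable_snd.aemeasurable hum.aestronglyMeasurable,
        ← integral_indicator (hE.prod MeasurableSet.univ)]
      refine integral_congr_ae (Filter.Eventually.of_forall fun p => ?_)
      by_cases hp : p.1 ∈ E
      · simp [Set.indicator_of_mem, hp, Set.mem_prod]
      · simp [Set.indicator_of_notMem, hp, Set.mem_prod]
    have hstep := stepA P θ lam r hErg μ hfst hinv hE hu
    rw [hl1, hIνE, hstep, lintegral_smul_measure, hl2,
      ENNReal.ofReal_mul ENNReal.toReal_nonneg,
      ENNReal.ofReal_toReal (measure_ne_top P E)]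
    rfl
  have hνEB : νE B = μ (E ×ˢ B) := by
    rw [hνE, Measure.map_apply measurable_snd hB,
      Measure.restrict_apply (measurable_snd hB), ← Set.univ_prod,
      Set.prod_inter_prod, Set.univ_inter, Set.inter_univ]
  rw [← hνEB, hext]
  simp [Measure.smul_apply, smul_eq_mul]

end RandomCircle
end
end
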